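/- If G is a finitely generated centerless group, then the automorphism tower of G stabilizes at a countable stage: τ_G < ℵ₁. -/

import Mathlib

universe u

/-- The automorphism tower of a centerless group `G`: an ordinal-indexed increasing
continuous chain of groups, starting at `G`, where each successor stage is (identified
with) the automorphism group of the previous stage via the conjugation embedding. -/
structure AutTower (G : Type u) [Group G] where
  /-- the `o`-th stage `G^o` of the tower -/
  Stage : Ordinal.{u} → GrpCat.{u}
  /-- the inclusion maps of the tower -/
  map : ∀ ⦃o₁ o₂ : Ordinal.{u}⦄, o₁ ≤ o₂ → (↥(Stage o₁) →* ↥(Stage o₂))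
  map_id : ∀ (o : Ordinal.{u}) (x : ↥(Stage o)), map le_rfl x = x
  map_comp : ∀ ⦃o₁ o₂ o₃ : Ordinal.{u}⦄ (h₁ : o₁ ≤ o₂) (h₂ : o₂ ≤ o₃) (x : ↥(Stage o₁)),
      map h₂ (map h₁ x) = map (h₁.trans h₂) x
  map_injective : ∀ ⦃o₁ o₂ : Ordinal.{u}⦄ (h : o₁ ≤ o₂), Function.Injective (map h)
  /-- the identification of `G` with the `0`-th stage -/
  emb0 : G ≃* ↥(Stage 0)
  /-- the identification of the `(o+1)`-st stage with `Aut(G^o)` -/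
  succIso : ∀ o : Ordinal.{u}, ↥(Stage (o + 1)) ≃* MulAut ↥(Stage o)
  /-- under the above identification, the inclusion `G^o ≤ G^{o+1}` is `g ↦` conjugation by `g` -/
  succIso_map : ∀ (o : Ordinal.{u}) (x : ↥(Stage o)),
      succIso o (map (le_self_add (a := o) (b := 1)) x) = MulAut.conj x
  /-- at limit stages the tower is continuous: `G^δ = ⋃_{α<δ} G^α` -/
  limit_covers : ∀ (o : Ordinal.{u}), Order.IsSuccLimit o → ∀ x : ↥(Stage o),
      ∃ (o' : Ordinal.{u}) (h : o' < o), x ∈ Set.range (map h.le)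

namespace AutTower

variable {G : Type u} [Group G]

/-- the embedding of `G` into the `o`-th stage of its automorphism tower -/
def embed (T : AutTower G) (o : Ordinal.{u}) : G →* ↥(T.Stage o) :=
  (T.map (zero_le (a := o))).comp T.emb0.toMonoidHom

/-- `G^{o+1} = G^o`, i.e. the inclusion of stage `o` into stage `o+1` is onto -/
def StabilizesAt (T : AutTower G) (o : Ordinal.{u}) : Prop :=
  Function.Surjective (T.map (le_self_add (a := o) (b := 1)))

end AutTower

section Helpers

variable {G : Type u} [Group G]

lemma mulAut_conj_conj {H : Type*} [Group H] (τ : MulAut H) (y : H) :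
    τ * MulAut.conj y * τ⁻¹ = MulAut.conj (τ y) := by
  ext z
  simp only [MulAut.mul_apply, MulAut.conj_apply, map_mul, map_inv]
  simp [MulEquiv.apply_symm_apply]

namespace AutTower

lemma embed_compat (T : AutTower G) {o₁ o₂ : Ordinal.{u}} (h : o₁ ≤ o₂) (g : G) :
    T.map h (T.embed o₁ g) = T.embed o₂ g :=
  T.map_comp (zero_le (a := o₁)) h (T.emb0 g)

lemma conj_formula (T : AutTower G) (r : Ordinal.{u}) (x : ↥(T.Stage (r + 1)))
    (y : ↥(T.Stage r)) :
    x * T.map (le_self_add (a := r) (b := 1)) y * x⁻¹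
      = T.map (le_self_add (a := r) (b := 1)) ((T.succIso r x) y) := by
  apply (T.succIso r).injective
  simp only [map_mul, map_inv, T.succIso_map]
  exact mulAut_conj_conj _ _

lemma conj_embed_succ (T : AutTower G) (p : Ordinal.{u}) (σ : ↥(T.Stage (p + 1))) (g : G) :
    σ * T.embed (p + 1) g * σ⁻¹
      = T.map (le_self_add (a := p) (b := 1)) ((T.succIso p σ) (T.embed p g)) := by
  rw [← T.embed_compat (le_self_add (a := p) (b := 1)) g, T.conj_formula]

end AutTower

end Helpers

lemma countable_subgroup_closure {α : Type u} [Group α] (s : Set α) [Countable s] :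
    Countable (Subgroup.closure s) := by
  have hc : Countable (FreeGroup s) := by unfold FreeGroup; infer_instance
  have h := FreeGroup.range_lift_eq_closure (f := (Subtype.val : s → α))
  rw [Subtype.range_val] at h
  have : Countable ((FreeGroup.lift (Subtype.val : s → α)).range) :=
    (MonoidHom.rangeRestrict_surjective _).countable
  rw [h] at this
  exact this
namespace AutTower

variable {G : Type u} [Group G]

theorem centralizer_embed_eq_one (hG : Subgroup.center G = ⊥) (T : AutTower G) :
    ∀ o : Ordinal.{u}, ∀ c : ↥(T.Stage o), (∀ g : G, c * T.embed o g = T.embed o g * c) → c = 1 := by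
  intro o
  induction o using Ordinal.induction with
  | h o IH =>
  intro c hc
  rcases Ordinal.zero_or_succ_or_isSuccLimit o with h0 | ⟨p, hp⟩ | hlim
  · subst h0
    have e0 : ∀ g : G, T.embed 0 g = T.emb0 g := fun g => T.map_id 0 (T.emb0 g)
    have hmem : T.emb0.symm c ∈ Subgroup.center G := by
      rw [Subgroup.mem_center_iff]
      intro g
      apply T.emb0.injective
      have := hc g
      rw [e0 g] at this
      simpa [map_mul] using this.symm
    rw [hG, Subgroup.mem_bot] at hmem
    have := congrArg T.emb0 hmem
    simpa using this
  · have hp' : o = p + 1 := by rw [← hp, Ordinal.add_one_eq_succ]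
    subst hp'
    have hplt : p < p + 1 := by
      rw [Ordinal.add_one_eq_succ]; exact Order.lt_succ_of_not_isMax (not_isMax p)
    set σ := T.succIso p c with hσ
    have hps : p ≤ p + 1 := le_self_add (a := p) (b := 1)
    have hZp : ∀ z : ↥(T.Stage p), (∀ y : ↥(T.Stage p), z * y = y * z) → z = 1 := by
      intro z hz
      exact IH p hplt z (fun g => hz _)
    have fix_of_comm : ∀ y : ↥(T.Stage p),
        c * T.map hps y = T.map hps y * c → σ y = y := by
      intro y hy
      have h1 : σ * MulAut.conj y = MulAut.conj y * σ := by
        have h := congrArg (T.succIso p) hy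
        simpa only [map_mul, T.succIso_map] using h
      have h2 : MulAut.conj (σ y) = MulAut.conj y := by
        rw [← mulAut_conj_conj σ y, h1, mul_assoc, mul_inv_cancel, mul_one]
      have h3 : ∀ z : ↥(T.Stage p), (y⁻¹ * σ y) * z = z * (y⁻¹ * σ y) := by
        intro z
        have hthis := congrArg (fun (f : MulAut ↥(T.Stage p)) => f z) h2
        simp only [MulAut.conj_apply] at hthis
        calc (y⁻¹ * σ y) * z = y⁻¹ * (σ y * z * (σ y)⁻¹) * (σ y) := by group
          _ = y⁻¹ * (y * z * y⁻¹) * σ y := by rw [hthis]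
          _ = z * (y⁻¹ * σ y) := by group
      have h4 := hZp _ h3
      exact (inv_mul_eq_one.mp h4).symm
    have key : ∀ q : Ordinal.{u}, ∀ hq : q ≤ p, ∀ x : ↥(T.Stage q),
        σ (T.map hq x) = T.map hq x := by
      intro q
      induction q using Ordinal.induction with
      | h q IHq =>
      intro hq x
      rcases Ordinal.zero_or_succ_or_isSuccLimit q with h0 | ⟨r, hr⟩ | hlim
      · subst h0
        have hx : T.map hq x = T.embed p (T.emb0.symm x) := by
          show T.map hq x = T.map (zero_le (a := p)) (T.emb0 (T.emb0.symm x))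
          rw [MulEquiv.apply_symm_apply]
        rw [hx]
        apply fix_of_comm
        rw [T.embed_compat hps]
        exact hc _
      · have hr' : q = r + 1 := by rw [← hr, Ordinal.add_one_eq_succ]
        subst hr'
        have hrlt : r < r + 1 := by
          rw [Ordinal.add_one_eq_succ]; exact Order.lt_succ_of_not_isMax (not_isMax r)
        have hrp : r ≤ p := le_trans hrlt.le hq
        have conj_im : ∀ y : ↥(T.Stage r),
            (T.map hq x) * T.map hrp y * (T.map hq x)⁻¹
              = T.map hrp ((T.succIso r x) y) := by
          intro y
          have h1 := T.conj_formula r x y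
          have h2 := congrArg (T.map hq) h1
          simp only [map_mul, map_inv] at h2
          rwa [T.map_comp, T.map_comp] at h2
        have fixed : ∀ y : ↥(T.Stage r), σ (T.map hrp y) = T.map hrp y :=
          fun y => IHq r hrlt hrp y
        set mx := T.map hq x with hmx
        have hw : ∀ y : ↥(T.Stage r),
            (mx⁻¹ * σ mx) * T.map hrp y = T.map hrp y * (mx⁻¹ * σ mx) := by
          intro y
          have h2 := congrArg σ (conj_im y)
          simp only [map_mul, map_inv] at h2
          rw [fixed y, fixed _] at h2
          rw [← conj_im y] at h2
          -- h2 : σ mx * map y * (σ mx)⁻¹ = mx * map y * mx⁻¹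
          calc (mx⁻¹ * σ mx) * T.map hrp y
              = mx⁻¹ * (σ mx * T.map hrp y * (σ mx)⁻¹ * σ mx) := by group
            _ = mx⁻¹ * (mx * T.map hrp y * mx⁻¹ * σ mx) := by rw [h2]
            _ = T.map hrp y * (mx⁻¹ * σ mx) := by group
        have hw1 : mx⁻¹ * σ mx = 1 := by
          apply IH p hplt
          intro g
          have := hw (T.embed r g)
          rwa [T.embed_compat hrp] at this
        exact (inv_mul_eq_one.mp hw1).symm
      · obtain ⟨q', hq', y, hy⟩ := T.limit_covers q hlim x
        rw [← hy, T.map_comp]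
        exact IHq q' hq' (le_trans hq'.le hq) y
    have hfix : ∀ y : ↥(T.Stage p), σ y = y := by
      intro y
      have := key p le_rfl y
      rwa [T.map_id] at this
    have hσ1 : σ = 1 := MulEquiv.ext hfix
    apply (T.succIso p).injective
    rw [map_one]
    exact hσ1
  · obtain ⟨o', ho', b, hb⟩ := T.limit_covers o hlim c
    have hbc : ∀ g : G, b * T.embed o' g = T.embed o' g * b := by
      intro g
      apply T.map_injective ho'.le
      simp only [map_mul]
      rw [hb, T.embed_compat ho'.le]
      exact hc g
    have := IH o' ho' b hbc
    rw [← hb, this, map_one]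

end AutTower
namespace AutTower

variable {G : Type u} [Group G]

lemma eq_of_conj_eq (hG : Subgroup.center G = ⊥) (T : AutTower G) {S : Set G}
    (hS : Subgroup.closure S = ⊤) (o : Ordinal.{u}) (a b : ↥(T.Stage o))
    (h : ∀ g ∈ S, a * T.embed o g * a⁻¹ = b * T.embed o g * b⁻¹) : a = b := by
  have hK : ∀ g : G, (b⁻¹ * a) * T.embed o g = T.embed o g * (b⁻¹ * a) := by
    have hsub : S ⊆ ((Subgroup.centralizer {b⁻¹ * a}).comap (T.embed o) : Subgroup G) := by
      intro g hg
      simp only [SetLike.mem_coe, Subgroup.mem_comap, Subgroup.mem_centralizer_iff,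
        Set.mem_singleton_iff, forall_eq]
      have := h g hg
      calc (b⁻¹ * a) * T.embed o g
          = b⁻¹ * (a * T.embed o g * a⁻¹) * a := by group
        _ = b⁻¹ * (b * T.embed o g * b⁻¹) * a := by rw [this]
        _ = T.embed o g * (b⁻¹ * a) := by group
    have htop := (Subgroup.closure_le _).mpr hsub
    rw [hS] at htop
    intro g
    have hgmem : g ∈ (Subgroup.centralizer {b⁻¹ * a}).comap (T.embed o) :=
      htop (Subgroup.mem_top g)
    simp only [Subgroup.mem_comap, Subgroup.mem_centralizer_iff, Set.mem_singleton_iff,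
      forall_eq] at hgmem
    exact hgmem
  exact (inv_mul_eq_one.mp (T.centralizer_embed_eq_one hG o (b⁻¹ * a) hK)).symm

lemma countable_stage (hG : Subgroup.center G = ⊥) (T : AutTower G) [Countable G]
    {S : Finset G} (hS : Subgroup.closure (S : Set G) = ⊤) :
    ∀ o : Ordinal.{u}, o < (Cardinal.aleph 1).ord → Countable ↥(T.Stage o) := by
  intro o
  induction o using Ordinal.induction with
  | h o IH =>
  intro ho
  rcases Ordinal.zero_or_succ_or_isSuccLimit o with h0 | ⟨p, hp⟩ | hlim
  · subst h0
    exact Countable.of_equiv G T.emb0.toEquiv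
  · have hp' : o = p + 1 := by rw [← hp, Ordinal.add_one_eq_succ]
    subst hp'
    have hplt : p < p + 1 := by
      rw [Ordinal.add_one_eq_succ]; exact Order.lt_succ_of_not_isMax (not_isMax p)
    have hcp : Countable ↥(T.Stage p) := IH p hplt (lt_trans hplt ho)
    have hF : Function.Injective
        (fun (σ : ↥(T.Stage (p + 1))) => fun s : ↥S => (T.succIso p σ) (T.embed p (s : G))) := by
      intro σ τ hστ
      apply T.eq_of_conj_eq hG hS (p + 1) σ τ
      intro g hg
      rw [T.conj_embed_succ, T.conj_embed_succ]
      exact congrArg (T.map (le_self_add (a := p) (b := 1))) (congrFun hστ ⟨g, hg⟩)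
    exact hF.countable
  · haveI hcnt : Countable ↥(Set.Iio o) := by
      rw [← Cardinal.mk_le_aleph0_iff]
      have h1 : Cardinal.mk ↥(Set.Iio o) = Cardinal.lift.{u + 1} o.card :=
        Cardinal.mk_Iio_ordinal o
      rw [h1]
      have h2 : o.card ≤ Cardinal.aleph0 := by
        have h3 : o.card < Cardinal.aleph 1 := Cardinal.lt_ord.mp ho
        rw [← Cardinal.succ_aleph0] at h3
        exact Order.lt_succ_iff.mp h3
      calc Cardinal.lift.{u + 1} o.card ≤ Cardinal.lift.{u + 1} Cardinal.aleph0 :=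
            Cardinal.lift_le.mpr h2
        _ = Cardinal.aleph0 := Cardinal.lift_aleph0
    haveI : ∀ β : ↥(Set.Iio o), Countable ↥(T.Stage β.1) :=
      fun β => IH β.1 β.2 (lt_trans β.2 ho)
    have hsurj : Function.Surjective
        (fun x : (Σ β : ↥(Set.Iio o), ↥(T.Stage β.1)) =>
          T.map (le_of_lt (Set.mem_Iio.mp x.1.2)) x.2) := by
      intro x
      obtain ⟨o', ho', y, hy⟩ := T.limit_covers o hlim x
      exact ⟨⟨⟨o', ho'⟩, y⟩, hy⟩
    exact hsurj.countable

end AutTower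
/-- If `G` is a finitely generated centerless group, then the automorphism tower of
`G` stabilizes at a countable stage: `τ_G < ℵ₁`. -/
theorem autTower_stabilizes_countable_of_fg {G : Type u} [Group G]
    (hfg : Group.FG G) (hG : Subgroup.center G = ⊥) (T : AutTower G) :
    ∃ α : Ordinal.{u}, α < (Cardinal.aleph 1).ord ∧ T.StabilizesAt α := by
  classical
  obtain ⟨S₀, hS₀⟩ := hfg.out
  set S : Finset G := insert 1 S₀ with hSdef
  have hS : Subgroup.closure (S : Set G) = ⊤ := by
    apply le_antisymm le_top
    rw [← hS₀]
    apply Subgroup.closure_mono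
    simp only [hSdef, Finset.coe_insert]
    exact Set.subset_insert _ _
  have hone : (1 : G) ∈ S := Finset.mem_insert_self 1 S₀
  haveI hGc : Countable G := by
    haveI : Countable ↥(Subgroup.closure ((S₀ : Set G))) :=
      countable_subgroup_closure (S₀ : Set G)
    rw [hS₀] at this
    exact Countable.of_equiv _ Subgroup.topEquiv.toEquiv
  set Λ : Ordinal.{u} := (Cardinal.aleph 1).ord with hΛdef
  have hΛ : Order.IsSuccLimit Λ := Cardinal.isSuccLimit_ord (Cardinal.aleph0_le_aleph 1)
  -- rank function on Stage Λ
  choose ρ hρlt hρmem using T.limit_covers Λ hΛ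
  choose pre hpre using fun a => Set.mem_range.mp (hρmem a)
  -- conjugation tuples and their realizability rank
  set E : (↥S → ↥(T.Stage Λ)) → Prop := fun c =>
    ∃ a : ↥(T.Stage Λ), ∀ s : ↥S, a * T.embed Λ (s : G) * a⁻¹ = c s with hEdef
  set uval : (↥S → ↥(T.Stage Λ)) → Ordinal.{u} := fun c =>
    if h : E c then ρ h.choose + 1 else 0 with huvaldef
  have uval_lt : ∀ c, uval c < Λ := by
    intro c
    by_cases h : E c
    · simp only [huvaldef, dif_pos h]
      rw [Ordinal.add_one_eq_succ]
      exact hΛ.succ_lt (hρlt _)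
    · simp only [huvaldef, dif_neg h]
      exact hΛ.pos
  have uval_spec : ∀ (c : ↥S → ↥(T.Stage Λ)) (a : ↥(T.Stage Λ)),
      (∀ s : ↥S, a * T.embed Λ (s : G) * a⁻¹ = c s) → uval c = ρ a + 1 := by
    intro c a ha
    have hE : E c := ⟨a, ha⟩
    have hch := hE.choose_spec
    have hqa : hE.choose = a := by
      apply T.eq_of_conj_eq hG hS Λ
      intro g hg
      rw [hch ⟨g, hg⟩, ha ⟨g, hg⟩]
    simp only [huvaldef, dif_pos hE, hqa]
  -- Skolem function
  set hfun : Ordinal.{u} → Ordinal.{u} := fun β =>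
    if hβ : β ≤ Λ then ⨆ c : (↥S → ↥(T.Stage β)), uval (fun s => T.map hβ (c s)) else 0
    with hfundef
  have hfun_lt : ∀ β, β < Λ → hfun β < Λ := by
    intro β hβ
    simp only [hfundef, dif_pos hβ.le]
    haveI : Countable ↥(T.Stage β) := T.countable_stage hG hS β hβ
    have hΛω : Λ = Ordinal.omega 1 := by rw [hΛdef, Cardinal.ord_aleph]
    exact (Ordinal.iSup_lt_omega_one (fun c => (uval_lt _).trans_eq hΛω)).trans_eq hΛω.symm
  have hfun_ge : ∀ (β : Ordinal.{u}) (hβ : β ≤ Λ) (c : ↥S → ↥(T.Stage β)),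
      uval (fun s => T.map hβ (c s)) ≤ hfun β := by
    intro β hβ c
    simp only [hfundef, dif_pos hβ]
    exact Ordinal.le_iSup _ c
  -- closure sequence
  set gseq : ℕ → Ordinal.{u} := fun n => Nat.rec 0 (fun _ ih => max (hfun ih) (ih + 1)) n
    with hgseqdef
  have gseq_lt : ∀ n, gseq n < Λ := by
    intro n
    induction n with
    | zero => exact hΛ.pos
    | succ n ihn =>
      show max (hfun (gseq n)) (gseq n + 1) < Λ
      refine max_lt (hfun_lt _ ihn) ?_
      rw [Ordinal.add_one_eq_succ]
      exact hΛ.succ_lt ihn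
  have gseq_succ : ∀ n, gseq n < gseq (n + 1) := by
    intro n
    show gseq n < max (hfun (gseq n)) (gseq n + 1)
    refine lt_of_lt_of_le ?_ (le_max_right _ _)
    rw [Ordinal.add_one_eq_succ]
    exact Order.lt_succ_of_not_isMax (not_isMax _)
  set γ : Ordinal.{u} := ⨆ n, gseq n with hγdef
  have hle_γ : ∀ n, gseq n ≤ γ := fun n => Ordinal.le_iSup gseq n
  have hγΛ : γ < Λ := by
    rw [hΛdef, Cardinal.ord_aleph] at gseq_lt ⊢
    exact Ordinal.iSup_lt_omega_one gseq_lt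
  have hγpos : 0 < γ := lt_of_le_of_lt (zero_le (a := gseq 0))
    (lt_of_lt_of_le (gseq_succ 0) (hle_γ 1))
  have hγlim : Order.IsSuccLimit γ := by
    refine Ordinal.isSuccLimit_iff.mpr ⟨pos_iff_ne_zero.mp hγpos, Order.isSuccPrelimit_of_succ_lt ?_⟩
    intro a ha
    obtain ⟨n, hn⟩ := Ordinal.lt_iSup_iff.mp ha
    exact lt_of_le_of_lt (Order.succ_le_of_lt hn)
      (lt_of_lt_of_le (gseq_succ n) (hle_γ (n + 1)))
  -- final verification
  refine ⟨γ, hγΛ, ?_⟩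
  intro σ
  have hγ1 : γ + 1 < Λ := by rw [Ordinal.add_one_eq_succ]; exact hΛ.succ_lt hγΛ
  set a : ↥(T.Stage Λ) := T.map hγ1.le σ with hadef
  choose βf hβf hmem using fun s : ↥S =>
    T.limit_covers γ hγlim ((T.succIso γ σ) (T.embed γ (s : G)))
  choose cf hcf using fun s => Set.mem_range.mp (hmem s)
  haveI : Nonempty ↥S := ⟨⟨1, hone⟩⟩
  obtain ⟨s₀, hs₀⟩ := Finite.exists_max βf
  have hβγ : βf s₀ < γ := hβf s₀
  obtain ⟨n, hn⟩ := Ordinal.lt_iSup_iff.mp (hγdef ▸ hβγ)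
  have hδΛ : gseq n < Λ := gseq_lt n
  set c' : ↥S → ↥(T.Stage (gseq n)) :=
    fun s => T.map (le_trans (hs₀ s) hn.le) (cf s) with hc'def
  have key : ∀ s : ↥S, a * T.embed Λ (s : G) * a⁻¹ = T.map hδΛ.le (c' s) := by
    intro s
    have h1 := T.conj_embed_succ γ σ (s : G)
    have h2 := congrArg (T.map hγ1.le) h1
    simp only [map_mul, map_inv] at h2
    rw [T.embed_compat hγ1.le] at h2
    rw [T.map_comp] at h2
    rw [← hcf s] at h2
    rw [T.map_comp] at h2
    rw [h2, hc'def]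
    rw [T.map_comp]
  have hsize := uval_spec (fun s => T.map hδΛ.le (c' s)) a key
  have h3 : uval (fun s => T.map hδΛ.le (c' s)) ≤ hfun (gseq n) := hfun_ge (gseq n) hδΛ.le c'
  have h4 : hfun (gseq n) ≤ gseq (n + 1) := by
    show hfun (gseq n) ≤ max (hfun (gseq n)) (gseq n + 1)
    exact le_max_left _ _
  have h5 : ρ a + 1 ≤ γ := by
    rw [← hsize]
    exact le_trans h3 (le_trans h4 (hle_γ (n + 1)))
  have h6 : ρ a < γ := by
    rw [Ordinal.add_one_eq_succ] at h5
    exact Order.succ_le_iff.mp h5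
  refine ⟨T.map h6.le (pre a), ?_⟩
  apply T.map_injective hγ1.le
  rw [T.map_comp, T.map_comp, ← hadef]
  exact hpre a
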